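/- For every integer ℓ ≥ 5, the cycle C_ℓ is determined by its connected triples among graphs on the same ℓ labelled vertices: if G is a graph on vertices v_0, ..., v_{ℓ−1} whose set of connected triples is exactly {{v_i, v_{i+1}, v_{i+2}} : i mod ℓ}, then G is the cycle v_0 — v_1 — ... — v_{ℓ−1} — v_0. -/

import Mathlib

open SimpleGraph
set_option maxHeartbeats 1600000

section Helpers

variable {V : Type*}

lemma exists_first_step {G : SimpleGraph V} {u v : V} (h : G.Reachable u v) (hne : u ≠ v) :
    ∃ w, G.Adj u w := by
  obtain ⟨p⟩ := h
  cases p with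
  | nil => exact absurd rfl hne
  | cons h _ => exact ⟨_, h⟩

lemma conn3 (G : SimpleGraph V) (x y z : V) (s : Set V) (hs : s = {x, y, z}) (hxy : x ≠ y)
    (hc : (G.induce s).Connected) (hnxy : ¬ G.Adj x y) :
    G.Adj x z ∧ G.Adj y z := by
  subst hs
  have hx : x ∈ ({x,y,z} : Set V) := by simp
  have hy : y ∈ ({x,y,z} : Set V) := by simp
  have key : ∀ u v : V, u ∈ ({x,y,z} : Set V) → v ∈ ({x,y,z} : Set V) → ¬ G.Adj u v → u ≠ v →
      (∀ hu hv, (G.induce ({x,y,z} : Set V)).Reachable ⟨u, hu⟩ ⟨v, hv⟩) →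
      ∃ w ∈ ({x,y,z} : Set V), w ≠ u ∧ w ≠ v ∧ G.Adj u w := by
    intro u v hu hv hnuv hne hr
    obtain ⟨w, hw⟩ := exists_first_step (hr hu hv) (by simp [Subtype.ext_iff]; exact hne)
    have hadj : G.Adj u ↑w := hw
    refine ⟨↑w, w.2, ?_, ?_, hadj⟩
    · rintro rfl; exact G.irrefl hadj
    · rintro rfl; exact hnuv hadj
  obtain ⟨w1, hw1m, hw1x, hw1y, hadj1⟩ := key x y hx hy hnxy hxy (fun hu hv => hc.preconnected _ _)
  obtain ⟨w2, hw2m, hw2y, hw2x, hadj2⟩ := key y x hy hx (fun a => hnxy a.symm) hxy.symm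
    (fun hu hv => hc.preconnected _ _)
  rcases hw1m with h1|h1|h1 <;> rcases hw2m with h2|h2|h2 <;>
    first
      | (exact absurd h1 hw1x) | (exact absurd h1 hw1y)
      | (exact absurd h2 hw2x) | (exact absurd h2 hw2y)
      | (exact ⟨h1 ▸ hadj1, h2 ▸ hadj2⟩)

lemma star_conn (G : SimpleGraph V) (x y z : V) (hxy : G.Adj x y) (hxz : G.Adj x z) :
    (G.induce ({x, y, z} : Set V)).Connected := by
  rw [SimpleGraph.connected_iff]
  have hx : x ∈ ({x,y,z} : Set V) := by simp
  refine ⟨?_, ⟨⟨x, hx⟩⟩⟩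
  have key : ∀ u : ({x,y,z} : Set V), (G.induce ({x,y,z} : Set V)).Reachable u ⟨x, hx⟩ := by
    rintro ⟨u, hu⟩
    rcases hu with h|h|h
    · subst h; exact Reachable.refl _
    · subst h
      have : (G.induce ({x,u,z} : Set V)).Adj ⟨u, by simp⟩ ⟨x, hx⟩ := hxy.symm
      exact this.reachable
    · subst h
      have : (G.induce ({x,y,u} : Set V)).Adj ⟨u, by simp⟩ ⟨x, hx⟩ := hxz.symm
      exact this.reachable
  intro u v
  exact (key u).trans (key v).symm

end Helpers

lemma modk (x k ℓ : ℕ) (hx : x < ℓ) (hk : k < ℓ) :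
    ((x + k) % ℓ = x + k ∨ (x + k) % ℓ + ℓ = x + k) ∧ (x + k) % ℓ < ℓ := by
  rcases Nat.lt_or_ge (x + k) ℓ with h|h
  · exact ⟨Or.inl (Nat.mod_eq_of_lt h), by rw [Nat.mod_eq_of_lt h]; omega⟩
  · have : (x + k) % ℓ = x + k - ℓ := by
      rw [Nat.mod_eq_sub_mod h, Nat.mod_eq_of_lt (by omega)]
    omega

section FinArith

variable {ℓ : ℕ}

lemma fin_flat (x : Fin ℓ) (j k m : ℕ) (hj : j < ℓ) (hk : k < ℓ) (hm : m < ℓ)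
    (hjk : j + k = m) : x + ⟨j, hj⟩ + ⟨k, hk⟩ = x + ⟨m, hm⟩ := by
  apply Fin.ext
  simp only [Fin.add_def]
  rw [Nat.mod_add_mod, Nat.add_assoc, hjk]

lemma fin_wrap (x : Fin ℓ) (j k m : ℕ) (hj : j < ℓ) (hk : k < ℓ) (hm : m < ℓ)
    (hjk : j + k = ℓ + m) : x + ⟨j, hj⟩ + ⟨k, hk⟩ = x + ⟨m, hm⟩ := by
  apply Fin.ext
  simp only [Fin.add_def]
  rw [Nat.mod_add_mod, show x.val + j + k = x.val + m + ℓ by omega, Nat.add_mod_right]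

lemma fin_wrap0 (x : Fin ℓ) (j k : ℕ) (hj : j < ℓ) (hk : k < ℓ)
    (hjk : j + k = ℓ) : x + ⟨j, hj⟩ + ⟨k, hk⟩ = x := by
  apply Fin.ext
  simp only [Fin.add_def]
  rw [Nat.mod_add_mod, show x.val + j + k = x.val + ℓ by omega, Nat.add_mod_right,
    Nat.mod_eq_of_lt x.isLt]

lemma fin_ne0 (x : Fin ℓ) (k : ℕ) (h0 : 0 < k) (hk : k < ℓ) : x ≠ x + ⟨k, hk⟩ := by
  have := modk x.val k ℓ x.isLt hk
  simp only [ne_eq, Fin.ext_iff, Fin.add_def]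
  omega

lemma fin_ne_jk (x : Fin ℓ) (j k : ℕ) (hj : j < ℓ) (hk : k < ℓ) (hjk : j ≠ k) :
    x + ⟨j, hj⟩ ≠ x + ⟨k, hk⟩ := by
  have := modk x.val j ℓ x.isLt hj
  have := modk x.val k ℓ x.isLt hk
  simp only [ne_eq, Fin.ext_iff, Fin.add_def]
  omega

end FinArith

section L
variable {ℓ : ℕ} (hl : 4 < ℓ)

lemma L1 (a i : Fin ℓ)
    (h1 : a ∈ ({i, i + ⟨1, by omega⟩, i + ⟨2, by omega⟩} : Finset (Fin ℓ)))
    (h2 : a + (⟨2, by omega⟩ : Fin ℓ) ∈ ({i, i + ⟨1, by omega⟩, i + ⟨2, by omega⟩} : Finset (Fin ℓ)))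
    (h3 : a + (⟨3, by omega⟩ : Fin ℓ) ∈
      ({i, i + ⟨1, by omega⟩, i + ⟨2, by omega⟩} : Finset (Fin ℓ))) : False := by
  have ha := a.isLt
  have hi := i.isLt
  have d1 := modk a.val 2 ℓ ha (by omega)
  have d2 := modk a.val 3 ℓ ha (by omega)
  have d3 := modk i.val 1 ℓ hi (by omega)
  have d4 := modk i.val 2 ℓ hi (by omega)
  simp only [Finset.mem_insert, Finset.mem_singleton, Fin.ext_iff, Fin.add_def] at h1 h2 h3
  omega

lemma L2 (a c i : Fin ℓ)
    (hc1 : c ≠ a) (hc2 : c ≠ a + ⟨1, by omega⟩) (hc3 : c ≠ a + ⟨2, by omega⟩)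
    (hc4 : a ≠ c + ⟨1, by omega⟩)
    (h1 : a ∈ ({i, i + ⟨1, by omega⟩, i + ⟨2, by omega⟩} : Finset (Fin ℓ)))
    (h2 : a + (⟨1, by omega⟩ : Fin ℓ) ∈ ({i, i + ⟨1, by omega⟩, i + ⟨2, by omega⟩} : Finset (Fin ℓ)))
    (h3 : c ∈ ({i, i + ⟨1, by omega⟩, i + ⟨2, by omega⟩} : Finset (Fin ℓ))) : False := by
  have ha := a.isLt
  have hi := i.isLt
  have hc := c.isLt
  have d1 := modk a.val 1 ℓ ha (by omega)
  have d2 := modk a.val 2 ℓ ha (by omega)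
  have d3 := modk c.val 1 ℓ hc (by omega)
  have d4 := modk i.val 1 ℓ hi (by omega)
  have d5 := modk i.val 2 ℓ hi (by omega)
  simp only [Finset.mem_insert, Finset.mem_singleton, ne_eq, Fin.ext_iff, Fin.add_def]
    at h1 h2 h3 hc1 hc2 hc3 hc4
  omega

end L

theorem stmt15 (ℓ : ℕ) (hl : 5 ≤ ℓ) (G : SimpleGraph (Fin ℓ))
    (h : ∀ S : Finset (Fin ℓ), S.card = 3 →
      ((G.induce (S : Set (Fin ℓ))).Connected ↔
        ∃ i : Fin ℓ, S = {i, i + (⟨1, by omega⟩ : Fin ℓ), i + (⟨2, by omega⟩ : Fin ℓ)})) :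
    ∀ a b : Fin ℓ, G.Adj a b ↔
      (b = a + (⟨1, by omega⟩ : Fin ℓ) ∨ a = b + (⟨1, by omega⟩ : Fin ℓ)) := by
  have card3 : ∀ x y z : Fin ℓ, x ≠ y → x ≠ z → y ≠ z →
      ({x, y, z} : Finset (Fin ℓ)).card = 3 := by
    intro x y z h1 h2 h3
    rw [Finset.card_eq_three]
    exact ⟨x, y, z, h1, h2, h3, rfl⟩
  -- connectedness of consecutive triples
  have conn_consec : ∀ i : Fin ℓ,
      (G.induce ((({i, i + ⟨1, by omega⟩, i + ⟨2, by omega⟩} : Finset (Fin ℓ)) : Set (Fin ℓ)))).Connected := by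
    intro i
    refine (h _ (card3 _ _ _ ?_ ?_ ?_)).mpr ⟨i, rfl⟩
    · exact fin_ne0 i 1 (by omega) (by omega)
    · exact fin_ne0 i 2 (by omega) (by omega)
    · exact fin_ne_jk i 1 2 (by omega) (by omega) (by omega)
  -- shape1 : a star x+2 — x, x+2 — x+3 leads to contradiction
  have shape1 : ∀ x : Fin ℓ, G.Adj (x + ⟨2, by omega⟩) x →
      G.Adj (x + ⟨2, by omega⟩) (x + ⟨3, by omega⟩) → False := by
    intro x e1 e2
    have hconn := star_conn G (x + ⟨2, by omega⟩) x (x + ⟨3, by omega⟩) e1 e2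
    have hcoe : ((({x, x + ⟨2, by omega⟩, x + ⟨3, by omega⟩} : Finset (Fin ℓ))) : Set (Fin ℓ)) =
        ({x + ⟨2, by omega⟩, x, x + ⟨3, by omega⟩} : Set (Fin ℓ)) := by
      ext u
      simp only [Finset.coe_insert, Finset.coe_singleton, Set.mem_insert_iff,
        Set.mem_singleton_iff]
      tauto
    have hcard : ({x, x + ⟨2, by omega⟩, x + ⟨3, by omega⟩} : Finset (Fin ℓ)).card = 3 :=
      card3 _ _ _ (fin_ne0 x 2 (by omega) (by omega)) (fin_ne0 x 3 (by omega) (by omega))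
        (fin_ne_jk x 2 3 (by omega) (by omega) (by omega))
    obtain ⟨i, hEq⟩ := (h _ hcard).mp (by rw [hcoe]; exact hconn)
    have m1 : x ∈ ({x, x + ⟨2, by omega⟩, x + ⟨3, by omega⟩} : Finset (Fin ℓ)) := by simp
    have m2 : x + (⟨2, by omega⟩ : Fin ℓ) ∈
        ({x, x + ⟨2, by omega⟩, x + ⟨3, by omega⟩} : Finset (Fin ℓ)) := by simp
    have m3 : x + (⟨3, by omega⟩ : Fin ℓ) ∈
        ({x, x + ⟨2, by omega⟩, x + ⟨3, by omega⟩} : Finset (Fin ℓ)) := by simp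
    rw [hEq] at m1 m2 m3
    exact L1 hl x i m1 m2 m3
  -- claim1' : edges between consecutive vertices, shifted form
  have claim1' : ∀ b : Fin ℓ, G.Adj (b + ⟨1, by omega⟩) (b + ⟨2, by omega⟩) := by
    intro b
    by_contra hn
    -- triple {b, b+1, b+2}
    have c0 := conn_consec b
    have hcoe0 : ((({b, b + ⟨1, by omega⟩, b + ⟨2, by omega⟩} : Finset (Fin ℓ))) : Set (Fin ℓ)) =
        ({b + ⟨1, by omega⟩, b + ⟨2, by omega⟩, b} : Set (Fin ℓ)) := by
      ext u
      simp only [Finset.coe_insert, Finset.coe_singleton, Set.mem_insert_iff,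
        Set.mem_singleton_iff]
      tauto
    obtain ⟨e1, e2⟩ := conn3 G (b + ⟨1, by omega⟩) (b + ⟨2, by omega⟩) b _ hcoe0
      (fin_ne_jk b 1 2 (by omega) (by omega) (by omega)) c0 hn
    -- triple {b+1, b+2, b+3}
    have c1 := conn_consec (b + ⟨1, by omega⟩)
    have ef1 : b + (⟨1, by omega⟩ : Fin ℓ) + (⟨1, by omega⟩ : Fin ℓ) = b + ⟨2, by omega⟩ :=
      fin_flat b 1 1 2 (by omega) (by omega) (by omega) rfl
    have ef2 : b + (⟨1, by omega⟩ : Fin ℓ) + (⟨2, by omega⟩ : Fin ℓ) = b + ⟨3, by omega⟩ :=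
      fin_flat b 1 2 3 (by omega) (by omega) (by omega) rfl
    rw [ef1, ef2] at c1
    have hcoe1 : ((({b + ⟨1, by omega⟩, b + ⟨2, by omega⟩, b + ⟨3, by omega⟩} :
        Finset (Fin ℓ))) : Set (Fin ℓ)) =
        ({b + ⟨1, by omega⟩, b + ⟨2, by omega⟩, b + ⟨3, by omega⟩} : Set (Fin ℓ)) := by
      simp
    obtain ⟨e3, e4⟩ := conn3 G (b + ⟨1, by omega⟩) (b + ⟨2, by omega⟩) (b + ⟨3, by omega⟩)
      _ hcoe1 (fin_ne_jk b 1 2 (by omega) (by omega) (by omega)) c1 hn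
    exact shape1 b e2 e4
  -- claim1 : unshifted form
  have claim1 : ∀ a : Fin ℓ, G.Adj a (a + ⟨1, by omega⟩) := by
    intro a
    have w1 : a + (⟨ℓ - 1, by omega⟩ : Fin ℓ) + (⟨1, by omega⟩ : Fin ℓ) = a :=
      fin_wrap0 a (ℓ - 1) 1 (by omega) (by omega) (by omega)
    have w2 : a + (⟨ℓ - 1, by omega⟩ : Fin ℓ) + (⟨2, by omega⟩ : Fin ℓ) = a + ⟨1, by omega⟩ :=
      fin_wrap a (ℓ - 1) 2 1 (by omega) (by omega) (by omega) (by omega)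
    have := claim1' (a + ⟨ℓ - 1, by omega⟩)
    rwa [w1, w2] at this
  intro a b
  constructor
  · intro hab
    by_cases hb1 : b = a + ⟨1, by omega⟩
    · exact Or.inl hb1
    by_cases ha1 : a = b + ⟨1, by omega⟩
    · exact Or.inr ha1
    exfalso
    by_cases hb2 : b = a + ⟨2, by omega⟩
    · subst hb2
      have e2 : G.Adj (a + ⟨2, by omega⟩) (a + ⟨3, by omega⟩) := by
        have := claim1 (a + ⟨2, by omega⟩)
        rwa [fin_flat a 2 1 3 (by omega) (by omega) (by omega) rfl] at this
      exact shape1 a hab.symm e2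
    by_cases ha2 : a = b + ⟨2, by omega⟩
    · subst ha2
      have e2 : G.Adj (b + ⟨2, by omega⟩) (b + ⟨3, by omega⟩) := by
        have := claim1 (b + ⟨2, by omega⟩)
        rwa [fin_flat b 2 1 3 (by omega) (by omega) (by omega) rfl] at this
      exact shape1 b hab e2
    -- generic case: triple {a, a+1, b}
    have hconn := star_conn G a (a + ⟨1, by omega⟩) b (claim1 a) hab
    have hcoe : ((({a, a + ⟨1, by omega⟩, b} : Finset (Fin ℓ))) : Set (Fin ℓ)) =
        ({a, a + ⟨1, by omega⟩, b} : Set (Fin ℓ)) := by simp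
    have hcard : ({a, a + ⟨1, by omega⟩, b} : Finset (Fin ℓ)).card = 3 := by
      refine card3 _ _ _ (fin_ne0 a 1 (by omega) (by omega)) hab.ne ?_
      exact fun e => hb1 e.symm
    obtain ⟨i, hEq⟩ := (h _ hcard).mp (by rw [hcoe]; exact hconn)
    have m1 : a ∈ ({a, a + ⟨1, by omega⟩, b} : Finset (Fin ℓ)) := by simp
    have m2 : a + (⟨1, by omega⟩ : Fin ℓ) ∈ ({a, a + ⟨1, by omega⟩, b} : Finset (Fin ℓ)) := by simp
    have m3 : b ∈ ({a, a + ⟨1, by omega⟩, b} : Finset (Fin ℓ)) := by simp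
    rw [hEq] at m1 m2 m3
    exact L2 hl a b i hab.ne' hb1 hb2 ha1 m1 m2 m3
  · rintro (rfl | rfl)
    · exact claim1 a
    · exact (claim1 b).symm
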